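/- Let S be a dense subsemigroup of ((0,∞),+). Then there exists an ultrafilter p on S such that p + p = p and for every ε > 0, the set {x ∈ S : x < ε} belongs to p; that is, 0⁺(S) contains an additive idempotent ultrafilter. -/
import Mathlib


def IsDenseSubsemigroup (S : Set ℝ) : Prop :=
  (∀ x ∈ S, (0:ℝ) < x) ∧ (Set.Ioi (0:ℝ) ⊆ closure S) ∧ (∀ x ∈ S, ∀ y ∈ S, x + y ∈ S)

def zeroPlus (S : Set ℝ) : Set (Ultrafilter ℝ) :=
  {p | ∀ ε > (0:ℝ), {x | x ∈ S ∧ x < ε} ∈ p}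

def uAdd (p q : Ultrafilter ℝ) : Ultrafilter ℝ :=
  p.bind fun x => q.map fun y => x + y

attribute [local instance] Ultrafilter.add Ultrafilter.addSemigroup

lemma uAdd_eq (p q : Ultrafilter ℝ) : uAdd p q = p + q := by
  ext A
  change ({x | {y | x + y ∈ A} ∈ q} ∈ p) ↔ _
  exact (Ultrafilter.eventually_add p q (· ∈ A)).symm

lemma zeroPlus_closed (S : Set ℝ) : IsClosed (zeroPlus S) := by
  have : zeroPlus S = ⋂ ε ∈ Set.Ioi (0:ℝ), {p : Ultrafilter ℝ | {x | x ∈ S ∧ x < ε} ∈ p} := by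
    ext p; simp [zeroPlus, Set.mem_Ioi]
  rw [this]
  exact isClosed_biInter fun ε _ => ultrafilter_isClosed_basic _

/-- `0⁺(S)` contains an additive idempotent ultrafilter. -/
theorem exists_idempotent_zeroPlus (S : Set ℝ) (hS : IsDenseSubsemigroup S) :
    ∃ p : Ultrafilter ℝ, uAdd p p = p ∧ p ∈ zeroPlus S := by
  obtain ⟨hpos, hdense, hadd⟩ := hS
  -- nonemptiness of zeroPlus S
  have h0 : (0:ℝ) ∈ closure S := by
    have : closure (Set.Ioi (0:ℝ)) ⊆ closure S := closure_minimal hdense isClosed_closure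
    exact this (by simp [closure_Ioi])
  have hne : (nhdsWithin (0:ℝ) S).NeBot := mem_closure_iff_clusterPt.mp h0
  obtain ⟨q, hq⟩ := Ultrafilter.exists_le (nhdsWithin (0:ℝ) S)
  have hqmem : q ∈ zeroPlus S := by
    intro ε hε
    apply hq
    have : Set.Iio ε ∩ S ∈ nhdsWithin (0:ℝ) S :=
      Filter.inter_mem (nhdsWithin_le_nhds (Iio_mem_nhds hε)) self_mem_nhdsWithin
    refine Filter.mem_of_superset this ?_
    rintro x ⟨hx1, hx2⟩; exact ⟨hx2, hx1⟩
  -- zeroPlus S is a subsemigroup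
  have hsub : ∀ p ∈ zeroPlus S, ∀ r ∈ zeroPlus S, p + r ∈ zeroPlus S := by
    intro p hp r hr ε hε
    have h2 : (0:ℝ) < ε / 2 := by linarith
    have : (∀ᶠ m in ↑(p + r), m ∈ S ∧ m < ε) → {x | x ∈ S ∧ x < ε} ∈ p + r := fun h => h
    apply this
    rw [Ultrafilter.eventually_add]
    filter_upwards [hp _ h2] with x hx
    filter_upwards [hr _ h2] with y hy
    exact ⟨hadd x hx.1 y hy.1, by linarith [hx.2, hy.2]⟩
  obtain ⟨m, hm, hidem⟩ := exists_idempotent_in_compact_add_subsemigroup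
    Ultrafilter.continuous_add_left (zeroPlus S) ⟨q, hqmem⟩
    (zeroPlus_closed S).isCompact hsub
  exact ⟨m, by rw [uAdd_eq]; exact hidem, hm⟩
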